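/- Let P be a symmetric positive definite n×n real matrix, let λ_min and λ_max be its minimal and maximal eigenvalues, and let V(x) = xᵀ P x. Suppose x(t) solves ẋ = f(t,x) with d/dt V(x(t)) ≤ −‖x(t)‖² + 2Lδλ_max ‖x(t)‖ for constants L, δ > 0 whenever V(x(t)) ≥ c_ρ, where c_ρ > λ_max (2Lδλ_max)². Then the sublevel set {x : V(x) ≤ c_ρ} is positively invariant. -/
import Mathlib


open Matrix

theorem quadratic_lyapunov_sublevel_invariant (n : ℕ) (P : Matrix (Fin n) (Fin n) ℝ)
    (hPsym : P.IsHermitian) (hPdef : P.PosDef)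
    (lmin lmax L δ cρ : ℝ) (hlmin : 0 < lmin) (hlmax : lmin ≤ lmax)
    (hL : 0 < L) (hδ : 0 < δ)
    (hbounds : ∀ v : Fin n → ℝ,
      lmin * (∑ i, (v i) ^ 2) ≤ v ⬝ᵥ P.mulVec v ∧
        v ⬝ᵥ P.mulVec v ≤ lmax * (∑ i, (v i) ^ 2))
    (hcρ : lmax * (2 * L * δ * lmax) ^ 2 < cρ)
    (x : ℝ → (Fin n → ℝ)) (V' : ℝ → ℝ)
    (hx : ∀ t, HasDerivAt (fun s => x s ⬝ᵥ P.mulVec (x s)) (V' t) t)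
    (hineq : ∀ t, cρ ≤ x t ⬝ᵥ P.mulVec (x t) →
      V' t ≤ -(∑ i, (x t i) ^ 2) +
        2 * L * δ * lmax * Real.sqrt (∑ i, (x t i) ^ 2))
    (h0 : x 0 ⬝ᵥ P.mulVec (x 0) ≤ cρ) :
    ∀ t ≥ (0 : ℝ), x t ⬝ᵥ P.mulVec (x t) ≤ cρ := by
  set g : ℝ → ℝ := fun s => x s ⬝ᵥ P.mulVec (x s) with hg
  have hcont : Continuous g := by
    rw [continuous_iff_continuousAt]; exact fun t => (hx t).continuousAt
  have hlmax0 : 0 < lmax := lt_of_lt_of_le hlmin hlmax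
  set a : ℝ := 2 * L * δ * lmax with ha
  have ha0 : 0 < a := by positivity
  have key : ∀ t, cρ ≤ g t → V' t < 0 := by
    intro t ht
    have hs2 := (hbounds (x t)).2
    set s : ℝ := ∑ i, (x t i) ^ 2 with hsdef
    have hs0 : 0 ≤ s := Finset.sum_nonneg fun i _ => sq_nonneg _
    have h1 : lmax * a ^ 2 < lmax * s := lt_of_lt_of_le hcρ (le_trans ht hs2)
    have h2 : a ^ 2 < s := lt_of_mul_lt_mul_left h1 hlmax0.le
    have h3 : a < Real.sqrt s := (Real.lt_sqrt ha0.le).mpr h2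
    have h4 : V' t ≤ -s + a * Real.sqrt s := hineq t ht
    nlinarith [Real.sq_sqrt hs0, Real.sqrt_nonneg s]
  by_contra hcon
  push_neg at hcon
  obtain ⟨T, hT0, hTg⟩ := hcon
  have hT0' : 0 < T := by
    rcases hT0.lt_or_eq with h | h
    · exact h
    · exact absurd h0 (not_le.mpr (h ▸ hTg))
  set S : Set ℝ := Set.Icc (0 : ℝ) T ∩ {t | g t ≤ cρ} with hS
  have hS0 : (0 : ℝ) ∈ S := ⟨⟨le_refl 0, hT0'.le⟩, h0⟩
  have hSbdd : BddAbove S := ⟨T, fun t ht => ht.1.2⟩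
  have hSclosed : IsClosed S :=
    isClosed_Icc.inter (isClosed_le hcont continuous_const)
  set t₀ : ℝ := sSup S with ht₀
  have ht₀S : t₀ ∈ S := hSclosed.csSup_mem ⟨0, hS0⟩ hSbdd
  have ht₀T : t₀ < T := by
    rcases ht₀S.1.2.lt_or_eq with h | h
    · exact h
    · exact absurd ht₀S.2 (not_le.mpr (h ▸ hTg))
  have hmid : ∀ t ∈ Set.Ioo t₀ T, cρ ≤ g t := by
    intro t htm
    by_contra hgt
    push_neg at hgt
    have htS : t ∈ S := ⟨⟨le_trans ht₀S.1.1 htm.1.le, htm.2.le⟩, hgt.le⟩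
    exact absurd (le_csSup hSbdd htS) (not_le.mpr htm.1)
  have hanti : AntitoneOn g (Set.Icc t₀ T) := by
    apply antitoneOn_of_deriv_nonpos (convex_Icc _ _) hcont.continuousOn
    · intro t _
      exact (hx t).differentiableAt.differentiableWithinAt
    · intro t htm
      rw [interior_Icc] at htm
      rw [(hx t).deriv]
      exact (key t (hmid t htm)).le
  have hfin : g T ≤ g t₀ :=
    hanti (Set.left_mem_Icc.mpr ht₀T.le) (Set.right_mem_Icc.mpr ht₀T.le) ht₀T.le
  exact absurd (le_trans hfin ht₀S.2) (not_le.mpr hTg)
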